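/- Let S be a right zero semigroup and ω a weight on S. Then ℓ¹(S, ω) is biprojective: for any fixed t₀ ∈ S, the map ρ(f) = δ_{t₀} ⊗ f is a bounded ℓ¹(S,ω)-bimodule homomorphism from ℓ¹(S,ω) into the projective tensor product ℓ¹(S,ω) ⊗̂ ℓ¹(S,ω) satisfying π ∘ ρ = id, where π is the multiplication map. -/

import Mathlib

open scoped TensorProduct
open Filter
open scoped Classical

/-- A weight on a semigroup: strictly positive and submultiplicative. -/
def IsWeight {S : Type*} [Mul S] (ω : S → ℝ) : Prop :=
  (∀ s, 0 < ω s) ∧ ∀ s t, ω (s * t) ≤ ω s * ω t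

/-- A characterization of the Beurling algebra `ℓ¹(S, ω)`: a Banach algebra `A`
together with point masses `delta` and coefficient functionals such that every
element is the ℓ¹-sum of its coefficients against the point masses, with the
weighted ℓ¹-norm, and `delta` is multiplicative (`δ_s * δ_t = δ_{st}`). -/
structure BeurlingStructure (S : Type*) [Mul S] (ω : S → ℝ) (A : Type*)
    [NormedRing A] [NormedAlgebra ℂ A] where
  delta : S → A
  coeff : A →ₗ[ℂ] (S → ℂ)
  delta_mul : ∀ s t : S, delta s * delta t = delta (s * t)
  coeff_delta : ∀ s t : S, coeff (delta s) t = if t = s then 1 else 0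
  hasSum_coeff : ∀ a : A, HasSum (fun s => coeff a s • delta s) a
  norm_eq : ∀ a : A, ‖a‖ = ∑' s, ‖coeff a s‖ * ω s

/-- A pair of commuting continuous left/right module actions of a Banach algebra,
making `E` a Banach `A`-bimodule. -/
def IsBimodule {A : Type*} [NormedRing A] [NormedAlgebra ℂ A]
    {E : Type*} [NormedAddCommGroup E] [NormedSpace ℂ E]
    (l r : A →L[ℂ] E →L[ℂ] E) : Prop :=
  (∀ a b : A, l (a * b) = (l a).comp (l b)) ∧
  (∀ a b : A, r (a * b) = (r b).comp (r a)) ∧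
  (∀ a b : A, (l a).comp (r b) = (r b).comp (l a))

/-- Amenability of a Banach algebra: every bounded derivation into the dual of a
Banach bimodule is inner.  (The dual bimodule actions are `(a·f)(x) = f(x·a)` and
`(f·a)(x) = f(a·x)`.) -/
def IsAmenable (A : Type*) [NormedRing A] [NormedAlgebra ℂ A] : Prop :=
  ∀ (E : Type) [NormedAddCommGroup E] [NormedSpace ℂ E]
    (l r : A →L[ℂ] E →L[ℂ] E), IsBimodule l r →
    ∀ D : A →L[ℂ] (E →L[ℂ] ℂ),
      (∀ a b : A, D (a * b) = (D b).comp (r a) + (D a).comp (l b)) →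
      ∃ f : E →L[ℂ] ℂ, ∀ a : A, D a = f.comp (r a) - f.comp (l a)

/-- The projective tensor norm of an element of the algebraic tensor product. -/
noncomputable def projNorm (A B : Type*) [NormedAddCommGroup A] [NormedSpace ℂ A]
    [NormedAddCommGroup B] [NormedSpace ℂ B] (u : A ⊗[ℂ] B) : ℝ :=
  sInf {r : ℝ | ∃ (n : ℕ) (f : Fin n → A) (g : Fin n → B),
    u = ∑ i, f i ⊗ₜ[ℂ] g i ∧ r = ∑ i, ‖f i‖ * ‖g i‖}

/-- Left action `a • (x ⊗ y) = (a*x) ⊗ y` on `A ⊗ A`. -/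
noncomputable def tmulLeft {A : Type*} [NormedRing A] [NormedAlgebra ℂ A] (a : A) :
    A ⊗[ℂ] A →ₗ[ℂ] A ⊗[ℂ] A :=
  TensorProduct.map (LinearMap.mulLeft ℂ a) LinearMap.id

/-- Right action `(x ⊗ y) • a = x ⊗ (y*a)` on `A ⊗ A`. -/
noncomputable def tmulRight {A : Type*} [NormedRing A] [NormedAlgebra ℂ A] (a : A) :
    A ⊗[ℂ] A →ₗ[ℂ] A ⊗[ℂ] A :=
  TensorProduct.map LinearMap.id (LinearMap.mulRight ℂ a)

/-- Pseudo-amenability: existence of an approximate diagonal.  (Since the algebraic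
tensor product is dense in `A ⊗̂ A` in the projective norm, the approximate diagonal
may be taken in the algebraic tensor product, with the module-action conditions
measured in the projective tensor norm.) -/
def IsPseudoAmenable (A : Type*) [NormedRing A] [NormedAlgebra ℂ A] : Prop :=
  ∃ (ι : Type) (l : Filter ι), l.NeBot ∧ ∃ m : ι → A ⊗[ℂ] A,
    (∀ a : A, Tendsto (fun i => projNorm A A (tmulLeft a (m i) - tmulRight a (m i)))
        l (nhds 0)) ∧
    (∀ a : A, Tendsto (fun i => a * LinearMap.mul' ℂ A (m i)) l (nhds a))

/-- A witness for biprojectivity of `A`: a realization `X` of the completed projective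
tensor product `A ⊗̂ A` (with its bimodule actions and multiplication map `pihat`),
together with a bounded bimodule homomorphism `rho : A → A ⊗̂ A` with `π ∘ ρ = id`. -/
structure BiprojectiveWitness (A : Type*) [NormedRing A] [NormedAlgebra ℂ A] where
  X : Type
  [grp : NormedAddCommGroup X]
  [mod : NormedSpace ℂ X]
  [compl : CompleteSpace X]
  incl : A ⊗[ℂ] A →ₗ[ℂ] X
  dense_incl : DenseRange incl
  norm_incl : ∀ u, ‖incl u‖ = projNorm A A u
  lact : A →L[ℂ] X →L[ℂ] X
  ract : A →L[ℂ] X →L[ℂ] X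
  bimod : IsBimodule lact ract
  lact_incl : ∀ (a : A) u, lact a (incl u) = incl (tmulLeft a u)
  ract_incl : ∀ (a : A) u, ract a (incl u) = incl (tmulRight a u)
  pihat : X →L[ℂ] A
  pihat_incl : ∀ u, pihat (incl u) = LinearMap.mul' ℂ A u
  rho : A →L[ℂ] X
  rho_left : ∀ a b : A, rho (a * b) = lact a (rho b)
  rho_right : ∀ a b : A, rho (a * b) = ract b (rho a)
  pihat_rho : ∀ a : A, pihat (rho a) = a

attribute [instance] BiprojectiveWitness.grp BiprojectiveWitness.mod
  BiprojectiveWitness.compl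

/-- `A` is biprojective. -/
def IsBiprojective (A : Type*) [NormedRing A] [NormedAlgebra ℂ A] : Prop :=
  Nonempty (BiprojectiveWitness A)

/-- A witness for biflatness of `A`: a realization `X` of `A ⊗̂ A` together with a
bounded bimodule homomorphism `rho : A → (A ⊗̂ A)**` with `π** ∘ ρ = k_A`. -/
structure BiflatWitness (A : Type*) [NormedRing A] [NormedAlgebra ℂ A] where
  X : Type
  [grp : NormedAddCommGroup X]
  [mod : NormedSpace ℂ X]
  [compl : CompleteSpace X]
  incl : A ⊗[ℂ] A →ₗ[ℂ] X
  dense_incl : DenseRange incl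
  norm_incl : ∀ u, ‖incl u‖ = projNorm A A u
  lact : A →L[ℂ] X →L[ℂ] X
  ract : A →L[ℂ] X →L[ℂ] X
  bimod : IsBimodule lact ract
  lact_incl : ∀ (a : A) u, lact a (incl u) = incl (tmulLeft a u)
  ract_incl : ∀ (a : A) u, ract a (incl u) = incl (tmulRight a u)
  pihat : X →L[ℂ] A
  pihat_incl : ∀ u, pihat (incl u) = LinearMap.mul' ℂ A u
  rho : A →L[ℂ] ((X →L[ℂ] ℂ) →L[ℂ] ℂ)
  rho_left : ∀ (a b : A) (f : X →L[ℂ] ℂ), rho (a * b) f = rho b (f.comp (lact a))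
  rho_right : ∀ (a b : A) (f : X →L[ℂ] ℂ), rho (a * b) f = rho a (f.comp (ract b))
  pihat_rho : ∀ (a : A) (g : A →L[ℂ] ℂ), rho a (g.comp pihat) = g a

/-- `A` is biflat. -/
def IsBiflat (A : Type*) [NormedRing A] [NormedAlgebra ℂ A] : Prop :=
  Nonempty (BiflatWitness A)

/-- A realization of the completed projective tensor product `A ⊗̂ B` of two Banach
spaces: a Banach space in which the algebraic tensor product sits densely and
isometrically for the projective tensor norm. -/
structure ProjTensorWitness (A B : Type*) [NormedAddCommGroup A] [NormedSpace ℂ A]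
    [NormedAddCommGroup B] [NormedSpace ℂ B] where
  X : Type
  [grp : NormedAddCommGroup X]
  [mod : NormedSpace ℂ X]
  [compl : CompleteSpace X]
  incl : A ⊗[ℂ] B →ₗ[ℂ] X
  dense_incl : DenseRange incl
  norm_incl : ∀ u, ‖incl u‖ = projNorm A B u

attribute [instance] ProjTensorWitness.grp ProjTensorWitness.mod ProjTensorWitness.compl

/-- The principal ideal `S¹ s S¹` generated by `s`, inside the unitization `S¹`. -/
def principalIdeal {S : Type*} [Semigroup S] (s : S) : Set (WithOne S) :=
  {x | ∃ u v : WithOne S, x = u * (s : WithOne S) * v}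

/-- The Green-type relation `s τ t ↔ S¹sS¹ = S¹tS¹`. -/
def bandTau {S : Type*} [Semigroup S] (s t : S) : Prop :=
  principalIdeal s = principalIdeal t

/-- Amenability of a (topological) group: existence of a left-invariant mean on the
bounded continuous functions. -/
def GroupIsAmenable (G : Type*) [Group G] [TopologicalSpace G] [IsTopologicalGroup G] :
    Prop :=
  ∃ m : BoundedContinuousFunction G ℝ →L[ℝ] ℝ,
    m 1 = 1 ∧ (∀ f, 0 ≤ f → 0 ≤ m f) ∧
    ∀ (g : G) (f : BoundedContinuousFunction G ℝ),
      m (f.compContinuous ⟨fun x => g * x, continuous_mul_left g⟩) = m f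

/-- A characterization of the Beurling algebra `L¹(G, ω)` of a locally compact group
with Haar measure `μ`: a Banach algebra `A` whose elements are represented by
`ω`-integrable functions on `G`, with the weighted `L¹` norm and convolution product. -/
structure GroupBeurlingStructure (G : Type*) [Group G] [MeasurableSpace G]
    (μ : MeasureTheory.Measure G) (ω : G → ℝ) (A : Type*) [NormedRing A] [NormedAlgebra ℂ A] where
  toFun : A → G → ℂ
  integrable : ∀ a, MeasureTheory.Integrable (fun g => ‖toFun a g‖ * ω g) μ
  map_add : ∀ a b : A, toFun (a + b) =ᶠ[MeasureTheory.ae μ] toFun a + toFun b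
  map_smul : ∀ (c : ℂ) (a : A), toFun (c • a) =ᶠ[MeasureTheory.ae μ] c • toFun a
  eq_zero : ∀ a : A, toFun a =ᶠ[MeasureTheory.ae μ] 0 → a = 0
  norm_eq : ∀ a : A, ‖a‖ = ∫ g, ‖toFun a g‖ * ω g ∂μ
  map_mul : ∀ a b : A, toFun (a * b) =ᶠ[MeasureTheory.ae μ]
    fun x => ∫ t, toFun a t * toFun b (t⁻¹ * x) ∂μ
  surjective : ∀ f : G → ℂ, Measurable f →
    MeasureTheory.Integrable (fun g => ‖f g‖ * ω g) μ → ∃ a, toFun a =ᶠ[MeasureTheory.ae μ] f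

/-! ### Auxiliary lemmas about the projective tensor norm -/

section ProjNormBasics

variable {A B : Type*} [NormedAddCommGroup A] [NormedSpace ℂ A]
  [NormedAddCommGroup B] [NormedSpace ℂ B]

/-- The set of representation sums whose infimum is `projNorm`. -/
def projSet (u : A ⊗[ℂ] B) : Set ℝ :=
  {r : ℝ | ∃ (n : ℕ) (f : Fin n → A) (g : Fin n → B),
    u = ∑ i, f i ⊗ₜ[ℂ] g i ∧ r = ∑ i, ‖f i‖ * ‖g i‖}

lemma projNorm_def (u : A ⊗[ℂ] B) : projNorm A B u = sInf (projSet u) := rfl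

lemma projSet_nonempty (u : A ⊗[ℂ] B) : (projSet u).Nonempty := by
  obtain ⟨s, hs⟩ := TensorProduct.exists_finset u
  refine ⟨∑ i : Fin s.card, ‖(s.equivFin.symm i).1.1‖ * ‖(s.equivFin.symm i).1.2‖,
    s.card, fun i => (s.equivFin.symm i).1.1, fun i => (s.equivFin.symm i).1.2, ?_, rfl⟩
  rw [hs]
  rw [← Finset.sum_attach s (fun x => x.1 ⊗ₜ[ℂ] x.2), ← Finset.univ_eq_attach]
  exact Fintype.sum_equiv s.equivFin _ _ (fun x => by simp)

lemma projSet_bddBelow (u : A ⊗[ℂ] B) : BddBelow (projSet u) := by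
  refine ⟨0, fun r hr => ?_⟩
  obtain ⟨n, f, g, -, rfl⟩ := hr
  exact Finset.sum_nonneg fun i _ => mul_nonneg (norm_nonneg _) (norm_nonneg _)

lemma projNorm_nonneg (u : A ⊗[ℂ] B) : 0 ≤ projNorm A B u := by
  rw [projNorm_def]
  refine le_csInf (projSet_nonempty u) fun r hr => ?_
  obtain ⟨n, f, g, -, rfl⟩ := hr
  exact Finset.sum_nonneg fun i _ => mul_nonneg (norm_nonneg _) (norm_nonneg _)

lemma projNorm_le_of_mem {u : A ⊗[ℂ] B} {r : ℝ} (hr : r ∈ projSet u) :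
    projNorm A B u ≤ r :=
  csInf_le (projSet_bddBelow u) hr

lemma exists_rep_lt (u : A ⊗[ℂ] B) {ε : ℝ} (hε : 0 < ε) :
    ∃ (n : ℕ) (f : Fin n → A) (g : Fin n → B),
      u = ∑ i, f i ⊗ₜ[ℂ] g i ∧ (∑ i, ‖f i‖ * ‖g i‖) < projNorm A B u + ε := by
  have h : sInf (projSet u) < projNorm A B u + ε := by
    rw [projNorm_def]; linarith
  obtain ⟨r, hr, hrlt⟩ := exists_lt_of_csInf_lt (projSet_nonempty u) h
  obtain ⟨n, f, g, hu, rfl⟩ := hr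
  exact ⟨n, f, g, hu, hrlt⟩

lemma projNorm_tmul (x : A) (y : B) : projNorm A B (x ⊗ₜ[ℂ] y) ≤ ‖x‖ * ‖y‖ := by
  refine projNorm_le_of_mem ⟨1, fun _ => x, fun _ => y, by simp, by simp⟩

lemma projNorm_zero : projNorm A B 0 = 0 := by
  refine le_antisymm ?_ (projNorm_nonneg 0)
  refine projNorm_le_of_mem ⟨0, Fin.elim0, Fin.elim0, by simp, by simp⟩

lemma projNorm_add_le (u v : A ⊗[ℂ] B) :
    projNorm A B (u + v) ≤ projNorm A B u + projNorm A B v := by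
  refine le_of_forall_pos_le_add fun ε hε => ?_
  obtain ⟨m, f₁, g₁, hu, hs₁⟩ := exists_rep_lt u (half_pos hε)
  obtain ⟨n, f₂, g₂, hv, hs₂⟩ := exists_rep_lt v (half_pos hε)
  have hmem : (∑ i : Fin (m + n), ‖Fin.append f₁ f₂ i‖ * ‖Fin.append g₁ g₂ i‖) ∈
      projSet (u + v) := by
    refine ⟨m + n, Fin.append f₁ f₂, Fin.append g₁ g₂, ?_, rfl⟩
    rw [hu, hv, Fin.sum_univ_add]
    simp [Fin.append_left, Fin.append_right]
  have := projNorm_le_of_mem hmem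
  rw [Fin.sum_univ_add] at this
  simp only [Fin.append_left, Fin.append_right] at this
  linarith

lemma projNorm_smul_le (c : ℂ) (u : A ⊗[ℂ] B) :
    projNorm A B (c • u) ≤ ‖c‖ * projNorm A B u := by
  refine le_of_forall_pos_le_add fun ε hε => ?_
  have hδ : 0 < ε / (‖c‖ + 1) := by positivity
  obtain ⟨n, f, g, hu, hs⟩ := exists_rep_lt u hδ
  have hmem : (∑ i : Fin n, ‖c • f i‖ * ‖g i‖) ∈ projSet (c • u) := by
    refine ⟨n, fun i => c • f i, g, ?_, rfl⟩
    rw [hu, Finset.smul_sum]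
    simp [TensorProduct.smul_tmul']
  have h1 := projNorm_le_of_mem hmem
  have h2 : (∑ i : Fin n, ‖c • f i‖ * ‖g i‖) = ‖c‖ * ∑ i : Fin n, ‖f i‖ * ‖g i‖ := by
    rw [Finset.mul_sum]
    exact Finset.sum_congr rfl fun i _ => by rw [norm_smul]; ring
  have h3 : ‖c‖ * (∑ i : Fin n, ‖f i‖ * ‖g i‖) ≤
      ‖c‖ * (projNorm A B u + ε / (‖c‖ + 1)) :=
    mul_le_mul_of_nonneg_left hs.le (norm_nonneg c)
  have h4 : ‖c‖ * (ε / (‖c‖ + 1)) ≤ ε := by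
    rw [mul_div_assoc']
    rw [div_le_iff₀ (by positivity)]
    nlinarith [norm_nonneg c, hε.le]
  calc projNorm A B (c • u) ≤ ‖c‖ * ∑ i : Fin n, ‖f i‖ * ‖g i‖ := h2 ▸ h1
    _ ≤ ‖c‖ * projNorm A B u + ‖c‖ * (ε / (‖c‖ + 1)) := by rw [mul_add] at h3; linarith
    _ ≤ ‖c‖ * projNorm A B u + ε := by linarith

lemma projNorm_neg (u : A ⊗[ℂ] B) : projNorm A B (-u) = projNorm A B u := by
  have h : ∀ v : A ⊗[ℂ] B, projNorm A B (-v) ≤ projNorm A B v := fun v => by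
    have := projNorm_smul_le (-1 : ℂ) v
    simpa [neg_one_smul] using this
  refine le_antisymm (h u) ?_
  have := h (-u)
  rwa [neg_neg] at this

lemma projNorm_map_le {A' B' : Type*} [NormedAddCommGroup A'] [NormedSpace ℂ A']
    [NormedAddCommGroup B'] [NormedSpace ℂ B']
    (L : A →ₗ[ℂ] A') (R : B →ₗ[ℂ] B') (C D : ℝ) (hC : 0 ≤ C) (hD : 0 ≤ D)
    (hL : ∀ x, ‖L x‖ ≤ C * ‖x‖) (hR : ∀ y, ‖R y‖ ≤ D * ‖y‖) (u : A ⊗[ℂ] B) :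
    projNorm A' B' (TensorProduct.map L R u) ≤ C * D * projNorm A B u := by
  refine le_of_forall_pos_le_add fun ε hε => ?_
  have hδ : 0 < ε / (C * D + 1) := by positivity
  obtain ⟨n, f, g, hu, hs⟩ := exists_rep_lt u hδ
  have hmem : (∑ i : Fin n, ‖L (f i)‖ * ‖R (g i)‖) ∈
      projSet (TensorProduct.map L R u) := by
    refine ⟨n, fun i => L (f i), fun i => R (g i), ?_, rfl⟩
    rw [hu, map_sum]
    simp [TensorProduct.map_tmul]
  have h1 := projNorm_le_of_mem hmem
  have h2 : (∑ i : Fin n, ‖L (f i)‖ * ‖R (g i)‖) ≤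
      C * D * ∑ i : Fin n, ‖f i‖ * ‖g i‖ := by
    rw [Finset.mul_sum]
    refine Finset.sum_le_sum fun i _ => ?_
    calc ‖L (f i)‖ * ‖R (g i)‖ ≤ (C * ‖f i‖) * (D * ‖g i‖) :=
          mul_le_mul (hL _) (hR _) (norm_nonneg _) (by positivity)
      _ = C * D * (‖f i‖ * ‖g i‖) := by ring
  have h3 : C * D * (∑ i : Fin n, ‖f i‖ * ‖g i‖) ≤
      C * D * (projNorm A B u + ε / (C * D + 1)) :=
    mul_le_mul_of_nonneg_left hs.le (by positivity)
  have h4 : C * D * (ε / (C * D + 1)) ≤ ε := by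
    rw [mul_div_assoc', div_le_iff₀ (by positivity)]
    nlinarith [hε.le, mul_nonneg hC hD]
  calc projNorm A' B' (TensorProduct.map L R u)
      ≤ C * D * ∑ i : Fin n, ‖f i‖ * ‖g i‖ := h1.trans h2
    _ ≤ C * D * projNorm A B u + C * D * (ε / (C * D + 1)) := by
        rw [mul_add] at h3; linarith
    _ ≤ C * D * projNorm A B u + ε := by linarith

end ProjNormBasics

section MulPrime

variable {A : Type*} [NormedRing A] [NormedAlgebra ℂ A]

lemma norm_mul'_le (u : A ⊗[ℂ] A) : ‖LinearMap.mul' ℂ A u‖ ≤ projNorm A A u := by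
  rw [projNorm_def]
  refine le_csInf (projSet_nonempty u) fun r hr => ?_
  obtain ⟨n, f, g, rfl, rfl⟩ := hr
  rw [map_sum]
  refine (norm_sum_le _ _).trans (Finset.sum_le_sum fun i _ => ?_)
  rw [LinearMap.mul'_apply]
  exact norm_mul_le _ _

lemma tmulLeft_apply (a x y : A) : tmulLeft a (x ⊗ₜ[ℂ] y) = (a * x) ⊗ₜ[ℂ] y := rfl

lemma tmulRight_apply (a x y : A) : tmulRight a (x ⊗ₜ[ℂ] y) = x ⊗ₜ[ℂ] (y * a) := rfl

lemma tmulLeft_mul (a b : A) (u : A ⊗[ℂ] A) :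
    tmulLeft (a * b) u = tmulLeft a (tmulLeft b u) := by
  induction u using TensorProduct.induction_on with
  | zero => simp
  | tmul x y => simp [tmulLeft_apply, mul_assoc]
  | add x y hx hy => simp [map_add, hx, hy]

lemma tmulRight_mul (a b : A) (u : A ⊗[ℂ] A) :
    tmulRight (a * b) u = tmulRight b (tmulRight a u) := by
  induction u using TensorProduct.induction_on with
  | zero => simp
  | tmul x y => simp [tmulRight_apply, mul_assoc]
  | add x y hx hy => simp [map_add, hx, hy]

lemma tmulLeft_tmulRight (a b : A) (u : A ⊗[ℂ] A) :
    tmulLeft a (tmulRight b u) = tmulRight b (tmulLeft a u) := by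
  induction u using TensorProduct.induction_on with
  | zero => simp
  | tmul x y => simp [tmulLeft_apply, tmulRight_apply]
  | add x y hx hy => simp [map_add, hx, hy]

lemma tmulLeft_add (a b : A) (u : A ⊗[ℂ] A) :
    tmulLeft (a + b) u = tmulLeft a u + tmulLeft b u := by
  induction u using TensorProduct.induction_on with
  | zero => simp
  | tmul x y => simp [tmulLeft_apply, add_mul, TensorProduct.add_tmul]
  | add x y hx hy => rw [map_add, hx, hy, map_add, map_add]; abel

lemma tmulRight_add (a b : A) (u : A ⊗[ℂ] A) :
    tmulRight (a + b) u = tmulRight a u + tmulRight b u := by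
  induction u using TensorProduct.induction_on with
  | zero => simp
  | tmul x y => simp [tmulRight_apply, mul_add, TensorProduct.tmul_add]
  | add x y hx hy => rw [map_add, hx, hy, map_add, map_add]; abel

lemma tmulLeft_smul (c : ℂ) (a : A) (u : A ⊗[ℂ] A) :
    tmulLeft (c • a) u = c • tmulLeft a u := by
  induction u using TensorProduct.induction_on with
  | zero => simp
  | tmul x y => simp [tmulLeft_apply, smul_mul_assoc, TensorProduct.smul_tmul']
  | add x y hx hy => rw [map_add, hx, hy, map_add, smul_add]

lemma tmulRight_smul (c : ℂ) (a : A) (u : A ⊗[ℂ] A) :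
    tmulRight (c • a) u = c • tmulRight a u := by
  induction u using TensorProduct.induction_on with
  | zero => simp
  | tmul x y => simp [tmulRight_apply, mul_smul_comm, TensorProduct.tmul_smul]
  | add x y hx hy => rw [map_add, hx, hy, map_add, smul_add]

lemma projNorm_tmulLeft_le (a : A) (u : A ⊗[ℂ] A) :
    projNorm A A (tmulLeft a u) ≤ ‖a‖ * projNorm A A u := by
  have h := projNorm_map_le (LinearMap.mulLeft ℂ a) (LinearMap.id (R := ℂ) (M := A))
    ‖a‖ 1 (norm_nonneg a) zero_le_one
    (fun x => by simpa [LinearMap.mulLeft_apply] using norm_mul_le a x)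
    (fun y => by simp) u
  simpa [tmulLeft] using h

lemma projNorm_tmulRight_le (a : A) (u : A ⊗[ℂ] A) :
    projNorm A A (tmulRight a u) ≤ ‖a‖ * projNorm A A u := by
  have h := projNorm_map_le (LinearMap.id (R := ℂ) (M := A)) (LinearMap.mulRight ℂ a)
    1 ‖a‖ zero_le_one (norm_nonneg a)
    (fun x => by simp)
    (fun y => by
      rw [LinearMap.mulRight_apply, mul_comm ‖a‖]
      exact norm_mul_le y a) u
  simpa [tmulRight] using h

end MulPrime

noncomputable section Construction

open UniformSpace SeparationQuotient

variable (A : Type) [NormedRing A] [NormedAlgebra ℂ A]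

/-- The projective tensor seminorm as an `AddGroupSeminorm`. -/
def projAGS : AddGroupSeminorm (A ⊗[ℂ] A) where
  toFun := projNorm A A
  map_zero' := projNorm_zero
  add_le' := projNorm_add_le
  neg' := projNorm_neg

instance tensorSNACG : SeminormedAddCommGroup (A ⊗[ℂ] A) :=
  (projAGS A).toSeminormedAddCommGroup

lemma tensor_norm_eq (u : A ⊗[ℂ] A) : ‖u‖ = projNorm A A u := rfl

instance tensorNormedSpace : NormedSpace ℂ (A ⊗[ℂ] A) where
  norm_smul_le c u := projNorm_smul_le c u

/-- The completed projective tensor product as the completion of the separation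
quotient. -/
abbrev XC : Type := Completion (SeparationQuotient (A ⊗[ℂ] A))

/-- The canonical map into the completed projective tensor product. -/
def incl0 : (A ⊗[ℂ] A) →L[ℂ] XC A :=
  (Completion.toComplL).comp (SeparationQuotient.mkCLM ℂ (A ⊗[ℂ] A))

lemma incl0_apply (u : A ⊗[ℂ] A) :
    incl0 A u = (SeparationQuotient.mk u : SeparationQuotient (A ⊗[ℂ] A)) := rfl

lemma norm_incl0 (u : A ⊗[ℂ] A) : ‖incl0 A u‖ = projNorm A A u := by
  rw [incl0_apply, Completion.norm_coe, SeparationQuotient.norm_mk]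
  exact tensor_norm_eq A u

lemma denseRange_incl0 : DenseRange (incl0 A) := by
  have h2 : DenseRange (SeparationQuotient.mk : A ⊗[ℂ] A → SeparationQuotient (A ⊗[ℂ] A)) :=
    SeparationQuotient.surjective_mk.denseRange
  have h1 : DenseRange ((↑) : SeparationQuotient (A ⊗[ℂ] A) → XC A) :=
    Completion.denseRange_coe
  exact h1.comp h2 (Completion.continuous_coe _)

variable {F : Type*} [NormedAddCommGroup F] [NormedSpace ℂ F]

lemma ext_incl0 (f g : XC A →L[ℂ] F)
    (h : ∀ u : A ⊗[ℂ] A, f (incl0 A u) = g (incl0 A u)) : f = g := by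
  ext x
  exact (denseRange_incl0 A).induction_on x (isClosed_eq f.continuous g.continuous) h

/-- Lift a continuous linear map on the tensor product to the separation quotient. -/
def liftQ (T : (A ⊗[ℂ] A) →L[ℂ] F) :
    SeparationQuotient (A ⊗[ℂ] A) →L[ℂ] F where
  toFun := SeparationQuotient.lift T fun x y h => (h.map T.continuous).eq
  map_add' := by
    rintro x y
    obtain ⟨x, rfl⟩ := SeparationQuotient.surjective_mk x
    obtain ⟨y, rfl⟩ := SeparationQuotient.surjective_mk y
    rw [← SeparationQuotient.mk_add]
    simp only [SeparationQuotient.lift_mk, map_add]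
  map_smul' := by
    rintro c x
    obtain ⟨x, rfl⟩ := SeparationQuotient.surjective_mk x
    rw [← SeparationQuotient.mk_smul]
    simp only [SeparationQuotient.lift_mk, map_smul, RingHom.id_apply]
  cont := SeparationQuotient.continuous_lift_iff.mpr T.continuous

lemma liftQ_mk (T : (A ⊗[ℂ] A) →L[ℂ] F) (u : A ⊗[ℂ] A) :
    liftQ A T (SeparationQuotient.mk u) = T u := rfl

lemma denseRange_toComplL :
    DenseRange (⇑(Completion.toComplL (𝕜 := ℂ) (E := SeparationQuotient (A ⊗[ℂ] A)))) := by
  rw [Completion.coe_toComplL]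
  exact Completion.denseRange_coe

lemma isUniformInducing_toComplL :
    IsUniformInducing (⇑(Completion.toComplL (𝕜 := ℂ) (E := SeparationQuotient (A ⊗[ℂ] A)))) := by
  rw [Completion.coe_toComplL]
  exact Completion.isUniformInducing_coe _

variable [CompleteSpace F]

/-- Extend a continuous linear map on the tensor product to the completion. -/
def extendCLM (T : (A ⊗[ℂ] A) →L[ℂ] F) : XC A →L[ℂ] F :=
  (liftQ A T).extend Completion.toComplL

lemma extendCLM_incl0 (T : (A ⊗[ℂ] A) →L[ℂ] F) (u : A ⊗[ℂ] A) :
    extendCLM A T (incl0 A u) = T u := by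
  have h := ContinuousLinearMap.extend_eq (liftQ A T)
    (denseRange_toComplL A) (isUniformInducing_toComplL A) (SeparationQuotient.mk u)
  exact h.trans (liftQ_mk A T u)

/-- `tmulLeft` as a continuous linear map. -/
def tmulLeftL (a : A) : (A ⊗[ℂ] A) →L[ℂ] (A ⊗[ℂ] A) :=
  LinearMap.mkContinuous (tmulLeft a) ‖a‖ fun u => projNorm_tmulLeft_le a u

/-- `tmulRight` as a continuous linear map. -/
def tmulRightL (a : A) : (A ⊗[ℂ] A) →L[ℂ] (A ⊗[ℂ] A) :=
  LinearMap.mkContinuous (tmulRight a) ‖a‖ fun u => projNorm_tmulRight_le a u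

/-- Left action on the completed tensor product. -/
def lactX (a : A) : XC A →L[ℂ] XC A :=
  extendCLM A ((incl0 A).comp (tmulLeftL A a))

/-- Right action on the completed tensor product. -/
def ractX (a : A) : XC A →L[ℂ] XC A :=
  extendCLM A ((incl0 A).comp (tmulRightL A a))

lemma lactX_incl0 (a : A) (u : A ⊗[ℂ] A) :
    lactX A a (incl0 A u) = incl0 A (tmulLeft a u) :=
  extendCLM_incl0 A _ u

lemma ractX_incl0 (a : A) (u : A ⊗[ℂ] A) :
    ractX A a (incl0 A u) = incl0 A (tmulRight a u) :=
  extendCLM_incl0 A _ u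

lemma lactX_norm (a : A) : ‖lactX A a‖ ≤ ‖a‖ := by
  refine ContinuousLinearMap.opNorm_le_bound _ (norm_nonneg a) fun x => ?_
  refine (denseRange_incl0 A).induction_on x ?_ fun u => ?_
  · exact isClosed_le (lactX A a).continuous.norm (continuous_const.mul continuous_norm)
  · rw [lactX_incl0, norm_incl0, norm_incl0]
    exact projNorm_tmulLeft_le a u

lemma ractX_norm (a : A) : ‖ractX A a‖ ≤ ‖a‖ := by
  refine ContinuousLinearMap.opNorm_le_bound _ (norm_nonneg a) fun x => ?_
  refine (denseRange_incl0 A).induction_on x ?_ fun u => ?_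
  · exact isClosed_le (ractX A a).continuous.norm (continuous_const.mul continuous_norm)
  · rw [ractX_incl0, norm_incl0, norm_incl0]
    exact projNorm_tmulRight_le a u

/-- The left action as a continuous linear map in the algebra variable. -/
def lactCLM : A →L[ℂ] XC A →L[ℂ] XC A :=
  LinearMap.mkContinuous
    { toFun := lactX A
      map_add' := fun a b => by
        refine ext_incl0 A _ _ fun u => ?_
        rw [lactX_incl0]
        simp only [ContinuousLinearMap.add_apply]
        rw [lactX_incl0, lactX_incl0, tmulLeft_add, map_add]
      map_smul' := fun c a => by
        refine ext_incl0 A _ _ fun u => ?_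
        rw [lactX_incl0]
        simp only [RingHom.id_apply, ContinuousLinearMap.smul_apply]
        rw [lactX_incl0, tmulLeft_smul, map_smul] }
    1 (fun a => by simpa using lactX_norm A a)

/-- The right action as a continuous linear map in the algebra variable. -/
def ractCLM : A →L[ℂ] XC A →L[ℂ] XC A :=
  LinearMap.mkContinuous
    { toFun := ractX A
      map_add' := fun a b => by
        refine ext_incl0 A _ _ fun u => ?_
        rw [ractX_incl0]
        simp only [ContinuousLinearMap.add_apply]
        rw [ractX_incl0, ractX_incl0, tmulRight_add, map_add]
      map_smul' := fun c a => by
        refine ext_incl0 A _ _ fun u => ?_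
        rw [ractX_incl0]
        simp only [RingHom.id_apply, ContinuousLinearMap.smul_apply]
        rw [ractX_incl0, tmulRight_smul, map_smul] }
    1 (fun a => by simpa using ractX_norm A a)

lemma lactCLM_apply (a : A) : lactCLM A a = lactX A a := rfl

lemma ractCLM_apply (a : A) : ractCLM A a = ractX A a := rfl

/-- The multiplication map on the completed tensor product. -/
def pihatC [CompleteSpace A] : XC A →L[ℂ] A :=
  extendCLM A (LinearMap.mkContinuous (LinearMap.mul' ℂ A) 1
    (fun u => by rw [one_mul]; exact norm_mul'_le u))

lemma pihatC_incl0 [CompleteSpace A] (u : A ⊗[ℂ] A) :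
    pihatC A (incl0 A u) = LinearMap.mul' ℂ A u :=
  extendCLM_incl0 A _ u

/-- The map `a ↦ d ⊗ a` as a continuous linear map into the completion. -/
def rhoCLM (d : A) : A →L[ℂ] XC A :=
  LinearMap.mkContinuous
    { toFun := fun a => incl0 A (d ⊗ₜ[ℂ] a)
      map_add' := fun a b => by simp [TensorProduct.tmul_add]
      map_smul' := fun c a => by simp [TensorProduct.tmul_smul] }
    ‖d‖ (fun a => by
      simp only [LinearMap.coe_mk, AddHom.coe_mk]
      rw [norm_incl0]
      exact projNorm_tmul d a)

lemma rhoCLM_apply (d a : A) : rhoCLM A d a = incl0 A (d ⊗ₜ[ℂ] a) := rfl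

/-- The map `a ↦ a ⊗ b` as a continuous linear map into the completion. -/
def lTensCLM (b : A) : A →L[ℂ] XC A :=
  LinearMap.mkContinuous
    { toFun := fun a => incl0 A (a ⊗ₜ[ℂ] b)
      map_add' := fun x y => by simp [TensorProduct.add_tmul]
      map_smul' := fun c x => by
        simp only [← TensorProduct.smul_tmul', map_smul, RingHom.id_apply] }
    ‖b‖ (fun a => by
      simp only [LinearMap.coe_mk, AddHom.coe_mk]
      rw [norm_incl0]
      exact (projNorm_tmul a b).trans (le_of_eq (mul_comm _ _)))

lemma lTensCLM_apply (b a : A) : lTensCLM A b a = incl0 A (a ⊗ₜ[ℂ] b) := rfl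

end Construction

section DeltaExt

/-- Two continuous linear maps out of a Beurling algebra agreeing on point masses
are equal. -/
lemma delta_ext {S : Type} [Mul S] {ω : S → ℝ} {A : Type} [NormedRing A]
    [NormedAlgebra ℂ A] (B : BeurlingStructure S ω A) {F : Type*}
    [NormedAddCommGroup F] [NormedSpace ℂ F] (f g : A →L[ℂ] F)
    (h : ∀ s, f (B.delta s) = g (B.delta s)) : f = g := by
  ext a
  have h1 := (B.hasSum_coeff a).mapL f
  have h2 := (B.hasSum_coeff a).mapL g
  simp only [map_smul] at h1 h2
  simp only [h] at h1
  exact h1.unique h2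

end DeltaExt


/-- For a right zero semigroup `S` with weight `ω`, `ℓ¹(S,ω)` is
biprojective, witnessed by `ρ(f) = δ_{t₀} ⊗ f` for any fixed `t₀ ∈ S`. -/
theorem stmt2 (S : Type) [Mul S] (hS : ∀ s t : S, s * t = t)
    (ω : S → ℝ) (hω : IsWeight ω)
    (A : Type) [NormedRing A] [NormedAlgebra ℂ A] [CompleteSpace A]
    (B : BeurlingStructure S ω A) (t₀ : S) :
    ∃ W : BiprojectiveWitness A, ∀ a : A, W.rho a = W.incl (B.delta t₀ ⊗ₜ[ℂ] a) := by
  classical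
  set d : A := B.delta t₀ with hd
  -- every point mass is a left identity
  have left_id : ∀ (s : S) (b : A), B.delta s * b = b := by
    intro s
    have hext : ContinuousLinearMap.mul ℂ A (B.delta s) = ContinuousLinearMap.id ℂ A := by
      refine delta_ext B _ _ fun t => ?_
      simp only [ContinuousLinearMap.mul_apply', ContinuousLinearMap.id_apply]
      rw [B.delta_mul, hS]
    intro b
    have := congrArg (fun (T : A →L[ℂ] A) => T b) hext
    simpa using this
  -- the key commutation identity
  have key : ∀ a b : A, incl0 A (d ⊗ₜ[ℂ] (a * b)) = incl0 A ((a * d) ⊗ₜ[ℂ] b) := by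
    intro a b
    have hext : (rhoCLM A d).comp ((ContinuousLinearMap.mul ℂ A).flip b) =
        (lTensCLM A b).comp ((ContinuousLinearMap.mul ℂ A).flip d) := by
      refine delta_ext B _ _ fun s => ?_
      simp only [ContinuousLinearMap.comp_apply, ContinuousLinearMap.flip_apply,
        ContinuousLinearMap.mul_apply', rhoCLM_apply, lTensCLM_apply]
      rw [left_id s b, B.delta_mul, hS, ← hd]
    have := congrArg (fun (T : A →L[ℂ] XC A) => T a) hext
    simpa [rhoCLM_apply, lTensCLM_apply] using this
  refine ⟨{
    X := XC A
    incl := (incl0 A).toLinearMap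
    dense_incl := denseRange_incl0 A
    norm_incl := norm_incl0 A
    lact := lactCLM A
    ract := ractCLM A
    bimod := ?_
    lact_incl := fun a u => lactX_incl0 A a u
    ract_incl := fun a u => ractX_incl0 A a u
    pihat := pihatC A
    pihat_incl := pihatC_incl0 A
    rho := rhoCLM A d
    rho_left := ?_
    rho_right := ?_
    pihat_rho := ?_ }, fun a => rfl⟩
  · -- bimodule axioms
    refine ⟨fun a b => ?_, fun a b => ?_, fun a b => ?_⟩
    · refine ext_incl0 A _ _ fun u => ?_
      rw [lactCLM_apply, lactX_incl0, ContinuousLinearMap.comp_apply, lactCLM_apply,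
        lactCLM_apply, lactX_incl0, lactX_incl0, tmulLeft_mul]
    · refine ext_incl0 A _ _ fun u => ?_
      rw [ractCLM_apply, ractX_incl0, ContinuousLinearMap.comp_apply, ractCLM_apply,
        ractCLM_apply, ractX_incl0, ractX_incl0, tmulRight_mul]
    · refine ext_incl0 A _ _ fun u => ?_
      rw [ContinuousLinearMap.comp_apply, ContinuousLinearMap.comp_apply, lactCLM_apply,
        ractCLM_apply, ractX_incl0, lactX_incl0, lactX_incl0, ractX_incl0,
        tmulLeft_tmulRight]
  · -- rho_left
    intro a b
    rw [rhoCLM_apply, rhoCLM_apply, lactCLM_apply, lactX_incl0]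
    have : tmulLeft a (d ⊗ₜ[ℂ] b) = (a * d) ⊗ₜ[ℂ] b := tmulLeft_apply a d b
    rw [this]
    exact key a b
  · -- rho_right
    intro a b
    rw [rhoCLM_apply, rhoCLM_apply, ractCLM_apply, ractX_incl0, tmulRight_apply]
  · -- pihat_rho
    intro a
    rw [rhoCLM_apply, pihatC_incl0, LinearMap.mul'_apply, hd, left_id]
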